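/- Let G and H be groups, M a submonoid of G and N a submonoid of H. Then the submonoid of the free product G ∗ H generated by M ∪ N is isomorphic to the monoid free product M ∗ N. -/

import Mathlib

open Monoid Function

namespace CoprodInjAux

set_option linter.unusedSectionVars false

variable {M N : Type*} [Monoid M] [Monoid N]

/-- Words are alternating and all letters are non-identity. -/
def Ok (w : List (M ⊕ N)) : Prop :=
  w.Chain' (fun a b => a.isLeft ≠ b.isLeft) ∧
    ∀ a ∈ w, Sum.elim (fun m => m ≠ 1) (fun n => n ≠ 1) a

theorem ok_nil : Ok ([] : List (M ⊕ N)) := ⟨List.isChain_nil, by simp⟩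

open Classical in
/-- Prepend an element of `M` to a word, with reduction. -/
noncomputable def pre1 (m : M) (w : List (M ⊕ N)) : List (M ⊕ N) :=
  if m = 1 then w
  else
    match w with
    | Sum.inl a :: t => if m * a = 1 then t else Sum.inl (m * a) :: t
    | Sum.inr a :: t => Sum.inl m :: Sum.inr a :: t
    | [] => [Sum.inl m]

open Classical in
noncomputable def pre2 (n : N) (w : List (M ⊕ N)) : List (M ⊕ N) :=
  if n = 1 then w
  else
    match w with
    | Sum.inr a :: t => if n * a = 1 then t else Sum.inr (n * a) :: t
    | Sum.inl a :: t => Sum.inr n :: Sum.inl a :: t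
    | [] => [Sum.inr n]

theorem pre1_one (w : List (M ⊕ N)) : pre1 1 w = w := by simp [pre1]
theorem pre2_one (w : List (M ⊕ N)) : pre2 1 w = w := by simp [pre2]

theorem pre1_ok {w : List (M ⊕ N)} (hw : Ok w) (m : M) : Ok (pre1 m w) := by
  classical
  obtain ⟨hc, hl⟩ := hw
  by_cases hm : m = 1
  · rw [hm, pre1_one]; exact ⟨hc, hl⟩
  rcases w with _ | ⟨a | a, t⟩
  · refine ⟨?_, ?_⟩ <;> simp [pre1, hm, List.Chain']
  · have ht : t.Chain' (fun a b => a.isLeft ≠ b.isLeft) := hc.tail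
    have hlt : ∀ a ∈ t, Sum.elim (fun m : M => m ≠ 1) (fun n : N => n ≠ 1) a :=
      fun x hx => hl x (List.mem_cons_of_mem _ hx)
    by_cases h1 : m * a = 1
    · rw [show pre1 m (Sum.inl a :: t) = t by simp [pre1, hm, h1]]
      exact ⟨ht, hlt⟩
    · rw [show pre1 m (Sum.inl a :: t) = Sum.inl (m * a) :: t by simp [pre1, hm, h1]]
      refine ⟨List.isChain_cons.2 ⟨?_, ht⟩, ?_⟩
      · intro y hy
        have := (List.isChain_cons.1 hc).1 y hy
        simpa using this
      · intro x hx
        rcases List.mem_cons.1 hx with rfl | hx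
        · simpa using h1
        · exact hlt x hx
  · rw [show pre1 m (Sum.inr a :: t) = Sum.inl m :: Sum.inr a :: t by simp [pre1, hm]]
    refine ⟨List.isChain_cons_cons.2 ⟨by simp, hc⟩, ?_⟩
    intro x hx
    rcases List.mem_cons.1 hx with rfl | hx
    · simpa using hm
    · exact hl x hx

theorem pre2_ok {w : List (M ⊕ N)} (hw : Ok w) (n : N) : Ok (pre2 n w) := by
  classical
  obtain ⟨hc, hl⟩ := hw
  by_cases hn : n = 1
  · rw [hn, pre2_one]; exact ⟨hc, hl⟩
  rcases w with _ | ⟨a | a, t⟩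
  · refine ⟨?_, ?_⟩ <;> simp [pre2, hn, List.Chain']
  · rw [show pre2 n (Sum.inl a :: t) = Sum.inr n :: Sum.inl a :: t by simp [pre2, hn]]
    refine ⟨List.isChain_cons_cons.2 ⟨by simp, hc⟩, ?_⟩
    intro x hx
    rcases List.mem_cons.1 hx with rfl | hx
    · simpa using hn
    · exact hl x hx
  · have ht : t.Chain' (fun a b => a.isLeft ≠ b.isLeft) := hc.tail
    have hlt : ∀ a ∈ t, Sum.elim (fun m : M => m ≠ 1) (fun n : N => n ≠ 1) a :=
      fun x hx => hl x (List.mem_cons_of_mem _ hx)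
    by_cases h1 : n * a = 1
    · rw [show pre2 n (Sum.inr a :: t) = t by simp [pre2, hn, h1]]
      exact ⟨ht, hlt⟩
    · rw [show pre2 n (Sum.inr a :: t) = Sum.inr (n * a) :: t by simp [pre2, hn, h1]]
      refine ⟨List.isChain_cons.2 ⟨?_, ht⟩, ?_⟩
      · intro y hy
        have := (List.isChain_cons.1 hc).1 y hy
        simpa using this
      · intro x hx
        rcases List.mem_cons.1 hx with rfl | hx
        · simpa using h1
        · exact hlt x hx

theorem pre1_mul (m m' : M) {w : List (M ⊕ N)} (hw : Ok w) :
    pre1 (m * m') w = pre1 m (pre1 m' w) := by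
  classical
  by_cases hm' : m' = 1
  · simp [hm', pre1_one]
  by_cases hm : m = 1
  · simp [hm, pre1_one]
  rcases w with _ | ⟨a | a, t⟩
  · by_cases h : m * m' = 1 <;> simp [pre1, h, hm, hm']
  · have ha : a ≠ 1 := by simpa using hw.2 (Sum.inl a) List.mem_cons_self
    -- the tail does not start with `inl`
    have htail : t = [] ∨ ∃ b t', t = Sum.inr b :: t' := by
      rcases t with _ | ⟨b | b, t'⟩
      · exact Or.inl rfl
      · exfalso
        have := (List.isChain_cons_cons.1 hw.1).1
        simp at this
      · exact Or.inr ⟨b, t', rfl⟩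
    by_cases h1 : m' * a = 1
    · have hsub : pre1 m' (Sum.inl a :: t) = t := by simp [pre1, hm', h1]
      rw [hsub]
      by_cases h2 : m * m' = 1
      · have hma : m = a := by
          calc m = m * (m' * a) := by rw [h1, mul_one]
          _ = m * m' * a := by rw [mul_assoc]
          _ = a := by rw [h2, one_mul]
        have hL : pre1 (m * m') (Sum.inl a :: t) = Sum.inl a :: t := by
          simp [pre1, h2]
        rw [hL, hma]
        rcases htail with rfl | ⟨b, t', rfl⟩
        · simp [pre1, ha]
        · simp [pre1, ha]
      · have h3 : m * m' * a = m := by rw [mul_assoc, h1, mul_one]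
        have hL : pre1 (m * m') (Sum.inl a :: t) = Sum.inl m :: t := by
          simp [pre1, h2, h3, hm]
        rw [hL]
        rcases htail with rfl | ⟨b, t', rfl⟩
        · simp [pre1, hm]
        · simp [pre1, hm]
    · have hsub : pre1 m' (Sum.inl a :: t) = Sum.inl (m' * a) :: t := by
        simp [pre1, hm', h1]
      rw [hsub]
      by_cases h2 : m * m' = 1
      · have h4 : m * (m' * a) = a := by rw [← mul_assoc, h2, one_mul]
        have h5 : ¬m * (m' * a) = 1 := by rw [h4]; exact ha
        simp [pre1, h2, h5, h4, hm, ha]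
      · have h6 : m * m' * a = m * (m' * a) := by rw [mul_assoc]
        simp only [pre1, if_neg hm, if_neg h2, h6]
  · have hsub : pre1 m' (Sum.inr a :: t) = Sum.inl m' :: Sum.inr a :: t := by
      simp [pre1, hm']
    rw [hsub]
    by_cases h2 : m * m' = 1 <;> simp [pre1, h2, hm]

theorem pre2_mul (n n' : N) {w : List (M ⊕ N)} (hw : Ok w) :
    pre2 (n * n') w = pre2 n (pre2 n' w) := by
  classical
  by_cases hn' : n' = 1
  · simp [hn', pre2_one]
  by_cases hn : n = 1
  · simp [hn, pre2_one]
  rcases w with _ | ⟨a | a, t⟩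
  · by_cases h : n * n' = 1 <;> simp [pre2, h, hn, hn']
  · have hsub : pre2 n' (Sum.inl a :: t) = Sum.inr n' :: Sum.inl a :: t := by
      simp [pre2, hn']
    rw [hsub]
    by_cases h2 : n * n' = 1 <;> simp [pre2, h2, hn]
  · have ha : a ≠ 1 := by simpa using hw.2 (Sum.inr a) List.mem_cons_self
    have htail : t = [] ∨ ∃ b t', t = Sum.inl b :: t' := by
      rcases t with _ | ⟨b | b, t'⟩
      · exact Or.inl rfl
      · exact Or.inr ⟨b, t', rfl⟩
      · exfalso
        have := (List.isChain_cons_cons.1 hw.1).1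
        simp at this
    by_cases h1 : n' * a = 1
    · have hsub : pre2 n' (Sum.inr a :: t) = t := by simp [pre2, hn', h1]
      rw [hsub]
      by_cases h2 : n * n' = 1
      · have hna : n = a := by
          calc n = n * (n' * a) := by rw [h1, mul_one]
          _ = n * n' * a := by rw [mul_assoc]
          _ = a := by rw [h2, one_mul]
        have hL : pre2 (n * n') (Sum.inr a :: t) = Sum.inr a :: t := by
          simp [pre2, h2]
        rw [hL, hna]
        rcases htail with rfl | ⟨b, t', rfl⟩
        · simp [pre2, ha]
        · simp [pre2, ha]
      · have h3 : n * n' * a = n := by rw [mul_assoc, h1, mul_one]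
        have hL : pre2 (n * n') (Sum.inr a :: t) = Sum.inr n :: t := by
          simp [pre2, h2, h3, hn]
        rw [hL]
        rcases htail with rfl | ⟨b, t', rfl⟩
        · simp [pre2, hn]
        · simp [pre2, hn]
    · have hsub : pre2 n' (Sum.inr a :: t) = Sum.inr (n' * a) :: t := by
        simp [pre2, hn', h1]
      rw [hsub]
      by_cases h2 : n * n' = 1
      · have h4 : n * (n' * a) = a := by rw [← mul_assoc, h2, one_mul]
        have h5 : ¬n * (n' * a) = 1 := by rw [h4]; exact ha
        simp [pre2, h2, h5, h4, hn, ha]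
      · have h6 : n * n' * a = n * (n' * a) := by rw [mul_assoc]
        simp only [pre2, if_neg hn, if_neg h2, h6]

/-- The set of alternating words with non-identity letters. -/
def W (M N : Type*) [Monoid M] [Monoid N] : Type _ :=
  {w : List (M ⊕ N) // Ok w}

noncomputable def phi1 : M →* Function.End (W M N) where
  toFun m := fun w => ⟨pre1 m w.1, pre1_ok w.2 m⟩
  map_one' := by funext w; exact Subtype.ext (pre1_one w.1)
  map_mul' m m' := by funext w; exact Subtype.ext (pre1_mul m m' w.2)

noncomputable def phi2 : N →* Function.End (W M N) where
  toFun n := fun w => ⟨pre2 n w.1, pre2_ok w.2 n⟩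
  map_one' := by funext w; exact Subtype.ext (pre2_one w.1)
  map_mul' n n' := by funext w; exact Subtype.ext (pre2_mul n n' w.2)

noncomputable def toEnd : Coprod M N →* Function.End (W M N) :=
  Coprod.lift phi1 phi2

/-- Multiply out a word in `Coprod M N`. -/
noncomputable def prodW (w : List (M ⊕ N)) : Coprod M N :=
  (w.map (Sum.elim (Coprod.inl : M →* Coprod M N) (Coprod.inr : N →* Coprod M N))).prod

theorem prodW_pre1 (m : M) (w : List (M ⊕ N)) :
    prodW (pre1 m w) = Coprod.inl m * prodW w := by
  classical
  by_cases hm : m = 1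
  · simp [hm, pre1_one]
  rcases w with _ | ⟨a | a, t⟩
  · simp [pre1, hm, prodW]
  · by_cases h1 : m * a = 1
    · have : (Coprod.inl m : Coprod M N) * Coprod.inl a = 1 := by
        rw [← map_mul, h1, map_one]
      simp [pre1, hm, h1, prodW, ← mul_assoc, this]
    · simp [pre1, hm, h1, prodW, ← mul_assoc]
  · simp [pre1, hm, prodW, mul_assoc]

theorem prodW_pre2 (n : N) (w : List (M ⊕ N)) :
    prodW (pre2 n w) = Coprod.inr n * prodW w := by
  classical
  by_cases hn : n = 1
  · simp [hn, pre2_one]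
  rcases w with _ | ⟨a | a, t⟩
  · simp [pre2, hn, prodW]
  · simp [pre2, hn, prodW, mul_assoc]
  · by_cases h1 : n * a = 1
    · have : (Coprod.inr n : Coprod M N) * Coprod.inr a = 1 := by
        rw [← map_mul, h1, map_one]
      simp [pre2, hn, h1, prodW, ← mul_assoc, this]
    · simp [pre2, hn, h1, prodW, ← mul_assoc]

theorem prodW_toEnd (x : Coprod M N) : ∀ w : W M N, prodW (toEnd x w).1 = x * prodW w.1 := by
  have hx : x ∈ Submonoid.closure
      (Set.range (Coprod.inl : M →* Coprod M N) ∪ Set.range (Coprod.inr : N →* Coprod M N)) := by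
    rw [Coprod.mclosure_range_inl_union_inr]; trivial
  induction hx using Submonoid.closure_induction with
  | mem y hy =>
    rcases hy with ⟨m, rfl⟩ | ⟨n, rfl⟩
    · intro w
      simp only [toEnd, Coprod.lift_apply_inl]
      exact prodW_pre1 m w.1
    · intro w
      simp only [toEnd, Coprod.lift_apply_inr]
      exact prodW_pre2 n w.1
  | one => intro w; rw [map_one, one_mul]; rfl
  | mul y z _ _ hy hz =>
    intro w
    have : toEnd (y * z) w = toEnd y (toEnd z w) := by rw [map_mul]; rfl
    rw [this, hy, hz, mul_assoc]

theorem toEnd_injective : Function.Injective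
    (fun x : Coprod M N => (toEnd x ⟨[], ok_nil⟩ : W M N)) := by
  intro x y h
  have h2 : (toEnd x ⟨[], ok_nil⟩ : W M N).1 = (toEnd y ⟨[], ok_nil⟩ : W M N).1 :=
    congrArg Subtype.val h
  have hx := prodW_toEnd x ⟨[], ok_nil⟩
  have hy := prodW_toEnd y ⟨[], ok_nil⟩
  rw [h2, hy] at hx
  simpa [prodW] using hx.symm

section Map

variable {G H : Type*} [Monoid G] [Monoid H] (f : M →* G) (g : N →* H)
  (hf : Function.Injective f) (hg : Function.Injective g)

/-- Map letters. -/
def lmap (w : List (M ⊕ N)) : List (G ⊕ H) := w.map (Sum.map f g)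

include hf in
theorem lmap_pre1 (m : M) (w : List (M ⊕ N)) :
    lmap f g (pre1 m w) = pre1 (f m) (lmap f g w) := by
  classical
  have h1iff : ∀ m : M, f m = 1 ↔ m = 1 := fun m =>
    ⟨fun h => hf (by rw [h, map_one]), fun h => by rw [h, map_one]⟩
  by_cases hm : m = 1
  · rw [hm, pre1_one, map_one, pre1_one]
  have hfm : ¬f m = 1 := fun h => hm ((h1iff m).1 h)
  rcases w with _ | ⟨a | a, t⟩
  · simp [pre1, hm, hfm, lmap]
  · by_cases h1 : m * a = 1
    · have : f m * f a = 1 := by rw [← map_mul, h1, map_one]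
      simp [pre1, hm, hfm, h1, this, lmap]
    · have : ¬f m * f a = 1 := by
        rw [← map_mul]; exact fun h => h1 ((h1iff _).1 h)
      simp [pre1, hm, hfm, h1, this, lmap]
  · simp [pre1, hm, hfm, lmap]

include hg in
theorem lmap_pre2 (n : N) (w : List (M ⊕ N)) :
    lmap f g (pre2 n w) = pre2 (g n) (lmap f g w) := by
  classical
  have h1iff : ∀ n : N, g n = 1 ↔ n = 1 := fun n =>
    ⟨fun h => hg (by rw [h, map_one]), fun h => by rw [h, map_one]⟩
  by_cases hn : n = 1
  · rw [hn, pre2_one, map_one, pre2_one]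
  have hgn : ¬g n = 1 := fun h => hn ((h1iff n).1 h)
  rcases w with _ | ⟨a | a, t⟩
  · simp [pre2, hn, hgn, lmap]
  · simp [pre2, hn, hgn, lmap]
  · by_cases h1 : n * a = 1
    · have : g n * g a = 1 := by rw [← map_mul, h1, map_one]
      simp [pre2, hn, hgn, h1, this, lmap]
    · have : ¬g n * g a = 1 := by
        rw [← map_mul]; exact fun h => h1 ((h1iff _).1 h)
      simp [pre2, hn, hgn, h1, this, lmap]

include hf hg in
theorem lmap_ok {w : List (M ⊕ N)} (hw : Ok w) : Ok (lmap f g w) := by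
  refine ⟨?_, ?_⟩
  · refine (List.isChain_map _).2 ?_
    refine hw.1.imp ?_
    intro a b hab
    rcases a with a | a <;> rcases b with b | b <;> simpa using hab
  · intro a ha
    rcases List.mem_map.1 ha with ⟨b, hb, rfl⟩
    have := hw.2 b hb
    rcases b with b | b
    · simpa using fun h => this (hf (by rw [h, map_one]))
    · simpa using fun h => this (hg (by rw [h, map_one]))

include hf hg in
theorem lmap_toEnd (x : Coprod M N) :
    ∀ w : W M N, lmap f g (toEnd x w).1
      = (toEnd (Coprod.map f g x) ⟨lmap f g w.1, lmap_ok f g hf hg w.2⟩ : W G H).1 := by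
  have hx : x ∈ Submonoid.closure
      (Set.range (Coprod.inl : M →* Coprod M N) ∪ Set.range (Coprod.inr : N →* Coprod M N)) := by
    rw [Coprod.mclosure_range_inl_union_inr]; trivial
  induction hx using Submonoid.closure_induction with
  | mem y hy =>
    rcases hy with ⟨m, rfl⟩ | ⟨n, rfl⟩
    · intro w
      simp only [toEnd, Coprod.lift_apply_inl, Coprod.map_apply_inl]
      exact lmap_pre1 f g hf m w.1
    · intro w
      simp only [toEnd, Coprod.lift_apply_inr, Coprod.map_apply_inr]
      exact lmap_pre2 f g hg n w.1
  | one => intro w; rw [map_one, map_one]; rfl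
  | mul y z _ _ hy hz =>
    intro w
    have h1 : toEnd (y * z) w = toEnd y (toEnd z w) := by rw [map_mul]; rfl
    have h2 : toEnd (Coprod.map f g (y * z)) ⟨lmap f g w.1, lmap_ok f g hf hg w.2⟩
        = toEnd (Coprod.map f g y) (toEnd (Coprod.map f g z)
            ⟨lmap f g w.1, lmap_ok f g hf hg w.2⟩) := by
      rw [map_mul, map_mul]; rfl
    rw [h1, h2, hy]
    have h3 : (⟨lmap f g (toEnd z w).1, lmap_ok f g hf hg (toEnd z w).2⟩ : W G H)
        = toEnd (Coprod.map f g z) ⟨lmap f g w.1, lmap_ok f g hf hg w.2⟩ :=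
      Subtype.ext (hz w)
    rw [h3]

include hf hg in
theorem map_injective : Function.Injective (Coprod.map f g) := by
  intro x y hxy
  apply toEnd_injective
  apply Subtype.ext
  have hx := lmap_toEnd f g hf hg x ⟨[], ok_nil⟩
  have hy := lmap_toEnd f g hf hg y ⟨[], ok_nil⟩
  have hinj : Function.Injective (lmap f g) :=
    List.map_injective_iff.2 (Sum.map_injective.2 ⟨hf, hg⟩)
  apply hinj
  rw [hx, hy]
  simp only [lmap, List.map_nil]
  rw [hxy]

end Map

end CoprodInjAux

open CoprodInjAux in
theorem submonoid_free_product_in_group_free_product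
    {G H : Type*} [Group G] [Group H] (M : Submonoid G) (N : Submonoid H) :
    ∀ f : Coprod M N →* Coprod G H,
      f = Coprod.lift ((Coprod.inl : G →* Coprod G H).comp M.subtype)
            ((Coprod.inr : H →* Coprod G H).comp N.subtype) →
      Function.Injective f ∧
        MonoidHom.mrange f = Submonoid.closure
          ((Coprod.inl : G →* Coprod G H) '' (M : Set G) ∪
           (Coprod.inr : H →* Coprod G H) '' (N : Set H)) := by
  intro f hf
  have hmap : f = Coprod.map M.subtype N.subtype := by
    rw [hf]
    exact Coprod.hom_ext
      (by rw [Coprod.lift_comp_inl, Coprod.map_comp_inl])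
      (by rw [Coprod.lift_comp_inr, Coprod.map_comp_inr])
  constructor
  · rw [hmap]
    exact map_injective M.subtype N.subtype Subtype.coe_injective Subtype.coe_injective
  · rw [Coprod.mrange_eq, hf, Coprod.lift_comp_inl, Coprod.lift_comp_inr,
      Submonoid.closure_union]
    congr 1
    · rw [MonoidHom.mrange_comp, Submonoid.mrange_subtype,
        ← MonoidHom.map_mclosure, Submonoid.closure_eq]
    · rw [MonoidHom.mrange_comp, Submonoid.mrange_subtype,
        ← MonoidHom.map_mclosure, Submonoid.closure_eq]
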